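/- Let f : [0,1]² → [0,1] be a measurable function and let I, I', J, J' ⊆ [0,1] be intervals of positive Lebesgue measure. Let 0 < ε ≤ 1, and let ε' > 0 be a quantity strictly less than each of: ε − 4·λ((I×J) Δ (I'×J'))/(ε²·λ(I)·λ(J)); (λ(I)·ε − λ(I \ I'))/λ(I'); and (λ(J)·ε − λ(J \ J'))/λ(J'). If (I', J') is interval ε'-regular for f, then (I, J) is interval ε-regular for f. -/

import Mathlib

open MeasureTheory

/-- Normalized integral density `d_f(A,B) = (∫_{A×B} f) / (λ(A) λ(B))`. -/
noncomputable def dBox (f : ℝ × ℝ → ℝ) (A B : Set ℝ) : ℝ :=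
  (∫ p in A ×ˢ B, f p) / ((volume A).toReal * (volume B).toReal)

/-- The pair of intervals `(I,J)` is interval `ε`-regular for `f`. -/
def IntervalRegularPair (f : ℝ × ℝ → ℝ) (ε : ℝ) (I J : Set ℝ) : Prop :=
  ∀ A B : Set ℝ, A ⊆ I → B ⊆ J → A.OrdConnected → B.OrdConnected →
    ε * (volume I).toReal ≤ (volume A).toReal →
    ε * (volume J).toReal ≤ (volume B).toReal →
    |dBox f A B - dBox f I J| ≤ ε

lemma vol_prod_toReal (A B : Set ℝ) :
    (volume (A ×ˢ B)).toReal = (volume A).toReal * (volume B).toReal := by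
  rw [MeasureTheory.Measure.volume_eq_prod, Measure.prod_prod, ENNReal.toReal_mul]

lemma dBox_eq_set (f : ℝ × ℝ → ℝ) (A B : Set ℝ) :
    dBox f A B = (∫ p in A ×ˢ B, f p) / (volume (A ×ˢ B)).toReal := by
  rw [dBox, vol_prod_toReal]

lemma auxIntegrable {f : ℝ × ℝ → ℝ} (hmeas : Measurable f)
    (hf : ∀ p, f p ∈ Set.Icc (0:ℝ) 1) {S : Set (ℝ × ℝ)} (hfin : volume S ≠ ⊤) :
    IntegrableOn f S := by
  refine Measure.integrableOn_of_bounded hfin hmeas.aestronglyMeasurable (M := 1) ?_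
  filter_upwards with p
  have h := hf p
  rw [Real.norm_eq_abs, abs_le]
  exact ⟨by linarith [h.1], h.2⟩

lemma auxInt_nonneg {f : ℝ × ℝ → ℝ} (hf : ∀ p, f p ∈ Set.Icc (0:ℝ) 1)
    (S : Set (ℝ × ℝ)) : 0 ≤ ∫ p in S, f p :=
  integral_nonneg fun p => (hf p).1

lemma auxInt_le {f : ℝ × ℝ → ℝ} (hmeas : Measurable f)
    (hf : ∀ p, f p ∈ Set.Icc (0:ℝ) 1) {S : Set (ℝ × ℝ)} (hfin : volume S ≠ ⊤) :
    ∫ p in S, f p ≤ (volume S).toReal := by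
  have h := norm_setIntegral_le_of_norm_le_const_ae' (f := f) (C := 1) hfin.lt_top
    (Filter.Eventually.of_forall fun p _ => by
      have h := hf p
      rw [Real.norm_eq_abs, abs_le]; exact ⟨by linarith [h.1], h.2⟩)
  calc ∫ p in S, f p ≤ ‖∫ p in S, f p‖ := le_abs_self _
    _ ≤ 1 * (volume S).toReal := h
    _ = (volume S).toReal := one_mul _

lemma split_toReal {S S' : Set (ℝ × ℝ)} (hS' : MeasurableSet S') (hsub : S' ⊆ S)
    (hfin : volume S ≠ ⊤) :
    (volume S).toReal = (volume S').toReal + (volume (S \ S')).toReal := by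
  have hfin' : volume S' ≠ ⊤ := (lt_of_le_of_lt (measure_mono hsub) hfin.lt_top).ne
  have hfinD : volume (S \ S') ≠ ⊤ :=
    (lt_of_le_of_lt (measure_mono Set.diff_subset) hfin.lt_top).ne
  have h := measure_inter_add_diff (μ := volume) S hS'
  rw [Set.inter_eq_right.mpr hsub] at h
  rw [← h, ENNReal.toReal_add hfin' hfinD]

lemma aux_ratio {m' s c r : ℝ} (hm' : 0 < m') (hs : 0 ≤ s) (hc0 : 0 ≤ c)
    (hc : c ≤ m') (hr0 : 0 ≤ r) (hr : r ≤ s) :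
    |(c + r) / (m' + s) - c / m'| ≤ s / (m' + s) := by
  have hm : 0 < m' + s := by linarith
  rw [abs_le, div_sub_div _ _ hm.ne' hm'.ne']
  constructor
  · rw [neg_le, ← neg_div, div_le_div_iff₀ (by positivity) hm]
    nlinarith [mul_le_mul_of_nonneg_right (show s * c - r * m' ≤ s * m' by nlinarith) hm.le]
  · rw [div_le_div_iff₀ (by positivity) hm]
    nlinarith [mul_le_mul_of_nonneg_right (show c * m' + r * m' - (m' + s) * c ≤ s * m' by nlinarith) hm.le]

lemma auxNested {f : ℝ × ℝ → ℝ} (hmeas : Measurable f)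
    (hf : ∀ p, f p ∈ Set.Icc (0:ℝ) 1) {S S' : Set (ℝ × ℝ)}
    (hS' : MeasurableSet S') (hsub : S' ⊆ S) (hfin : volume S ≠ ⊤)
    (hpos : 0 < (volume S').toReal) :
    |(∫ p in S, f p) / (volume S).toReal - (∫ p in S', f p) / (volume S').toReal|
      ≤ (volume (S \ S')).toReal / (volume S).toReal := by
  have hfin' : volume S' ≠ ⊤ := (lt_of_le_of_lt (measure_mono hsub) hfin.lt_top).ne
  have hfinD : volume (S \ S') ≠ ⊤ :=
    (lt_of_le_of_lt (measure_mono Set.diff_subset) hfin.lt_top).ne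
  have hsplit := split_toReal hS' hsub hfin
  have hIsplit : (∫ p in S', f p) + (∫ p in S \ S', f p) = ∫ p in S, f p := by
    have h := integral_inter_add_diff (f := f) (s := S) (μ := volume) hS'
      (auxIntegrable hmeas hf hfin)
    rwa [Set.inter_eq_right.mpr hsub] at h
  rw [← hIsplit, hsplit]
  exact aux_ratio hpos ENNReal.toReal_nonneg (auxInt_nonneg hf S')
    (auxInt_le hmeas hf hfin') (auxInt_nonneg hf (S \ S')) (auxInt_le hmeas hf hfinD)

lemma final_arith {ε ε' D i j i' j' k ab : ℝ}
    (hε0 : 0 < ε) (hε1 : ε ≤ 1) (hε'0 : 0 < ε')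
    (hij : 0 < i * j) (hij' : 0 < i' * j')
    (hab : ε ^ 2 * (i * j) ≤ ab)
    (hD0 : 0 ≤ D)
    (hk : i * j - k ≤ D) (hki' : k ≤ i' * j')
    (h1 : ε' < ε - 4 * D / (ε ^ 2 * i * j)) :
    D / ab + ε' + D / (i' * j') + D / (i * j) ≤ ε := by
  have hε2 : 0 < ε ^ 2 := by positivity
  have hden : 0 < ε ^ 2 * i * j := by nlinarith [mul_pos hε2 hij]
  have hab0 : 0 < ab := lt_of_lt_of_le (by nlinarith) hab
  have hDlt : 4 * D < ε * (ε ^ 2 * i * j) := by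
    have : 4 * D / (ε ^ 2 * i * j) < ε := by linarith
    exact (div_lt_iff₀ hden).mp this
  have hε3 : ε * (ε ^ 2 * i * j) ≤ i * j := by
    have h3' : ε ^ 3 ≤ 1 := pow_le_one₀ hε0.le hε1
    nlinarith [mul_nonneg (sub_nonneg.mpr h3') hij.le]
  have hkbig : (1 / 2) * (ε ^ 2 * i * j) ≤ k := by nlinarith
  set q : ℝ := D / (ε ^ 2 * i * j) with hq
  have hq0 : 0 ≤ q := div_nonneg hD0 hden.le
  have e1 : D / ab ≤ q := div_le_div_of_nonneg_left hD0 hden (by nlinarith)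
  have e3 : D / (i' * j') ≤ 2 * q := by
    have h1' : D / (i' * j') ≤ D / ((1 / 2) * (ε ^ 2 * i * j)) :=
      div_le_div_of_nonneg_left hD0 (by linarith) (le_trans hkbig hki')
    have h2' : D / ((1 / 2) * (ε ^ 2 * i * j)) = 2 * q := by
      rw [hq]; field_simp
    linarith
  have e4 : D / (i * j) ≤ q := div_le_div_of_nonneg_left hD0 hden (by nlinarith)
  have h1q : ε' + 4 * q < ε := by
    have : 4 * D / (ε ^ 2 * i * j) = 4 * q := by rw [hq]; ring
    linarith
  linarith

set_option maxHeartbeats 2000000 in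
/-- Interval regularity is robust under small perturbations of the pair of intervals. -/
theorem interval_regular_nudge (f : ℝ × ℝ → ℝ) (hmeas : Measurable f)
    (hf : ∀ p, f p ∈ Set.Icc (0 : ℝ) 1)
    (I I' J J' : Set ℝ)
    (hI : I.OrdConnected) (hI' : I'.OrdConnected)
    (hJ : J.OrdConnected) (hJ' : J'.OrdConnected)
    (hIsub : I ⊆ Set.Icc 0 1) (hI'sub : I' ⊆ Set.Icc 0 1)
    (hJsub : J ⊆ Set.Icc 0 1) (hJ'sub : J' ⊆ Set.Icc 0 1)
    (hIpos : 0 < (volume I).toReal) (hI'pos : 0 < (volume I').toReal)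
    (hJpos : 0 < (volume J).toReal) (hJ'pos : 0 < (volume J').toReal)
    (ε ε' : ℝ) (hε0 : 0 < ε) (hε1 : ε ≤ 1) (hε'0 : 0 < ε')
    (h1 : ε' < ε - 4 * (volume (symmDiff (I ×ˢ J) (I' ×ˢ J'))).toReal /
      (ε ^ 2 * (volume I).toReal * (volume J).toReal))
    (h2 : ε' < ((volume I).toReal * ε - (volume (I \ I')).toReal) / (volume I').toReal)
    (h3 : ε' < ((volume J).toReal * ε - (volume (J \ J')).toReal) / (volume J').toReal)
    (hreg : IntervalRegularPair f ε' I' J') :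
    IntervalRegularPair f ε I J := by
  intro A B hAI hBJ hA hB hAvol hBvol
  have mI' : MeasurableSet I' := hI'.measurableSet
  have mJ' : MeasurableSet J' := hJ'.measurableSet
  have mA : MeasurableSet A := hA.measurableSet
  have mB : MeasurableSet B := hB.measurableSet
  have mI : MeasurableSet I := hI.measurableSet
  have mJ : MeasurableSet J := hJ.measurableSet
  have finIcc : volume (Set.Icc (0:ℝ) 1) ≠ ⊤ := by simp [Real.volume_Icc]
  have finOf : ∀ {S : Set ℝ}, S ⊆ Set.Icc 0 1 → volume S ≠ ⊤ := fun hS =>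
    (lt_of_le_of_lt (measure_mono hS) finIcc.lt_top).ne
  have finI := finOf hIsub
  have finI' := finOf hI'sub
  have finJ := finOf hJsub
  have finJ' := finOf hJ'sub
  have hAsub : A ⊆ Set.Icc 0 1 := hAI.trans hIsub
  have hBsub : B ⊆ Set.Icc 0 1 := hBJ.trans hJsub
  have finBox : ∀ {S : Set (ℝ × ℝ)},
      S ⊆ Set.Icc (0:ℝ) 1 ×ˢ Set.Icc (0:ℝ) 1 → volume S ≠ ⊤ := by
    intro S hS
    have hbox : volume (Set.Icc (0:ℝ) 1 ×ˢ Set.Icc (0:ℝ) 1) ≠ ⊤ := by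
      rw [MeasureTheory.Measure.volume_eq_prod, Measure.prod_prod]
      exact ENNReal.mul_ne_top finIcc finIcc
    exact (lt_of_le_of_lt (measure_mono hS) hbox.lt_top).ne
  set A' := A ∩ I' with hA'def
  set B' := B ∩ J' with hB'def
  set K1 := I ∩ I' with hK1def
  set K2 := J ∩ J' with hK2def
  set D := (volume (symmDiff (I ×ˢ J) (I' ×ˢ J'))).toReal with hDdef
  have hΔsub : symmDiff (I ×ˢ J) (I' ×ˢ J') ⊆ Set.Icc (0:ℝ) 1 ×ˢ Set.Icc (0:ℝ) 1 :=
    Set.symmDiff_subset_union.trans (Set.union_subset (Set.prod_mono hIsub hJsub)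
      (Set.prod_mono hI'sub hJ'sub))
  have hDle : ∀ {X : Set (ℝ × ℝ)}, X ⊆ symmDiff (I ×ˢ J) (I' ×ˢ J') →
      (volume X).toReal ≤ D := fun hX =>
    ENNReal.toReal_mono (finBox hΔsub) (measure_mono hX)
  have hD0 : 0 ≤ D := ENNReal.toReal_nonneg
  -- measure on the line: splitting facts
  have hIsplit : (volume K1).toReal + (volume (I \ I')).toReal = (volume I).toReal := by
    have h := measure_inter_add_diff (μ := volume) I mI'
    rw [← h, ENNReal.toReal_add (finOf (Set.inter_subset_left.trans hIsub))
      (finOf (Set.diff_subset.trans hIsub))]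
  have hJsplit : (volume K2).toReal + (volume (J \ J')).toReal = (volume J).toReal := by
    have h := measure_inter_add_diff (μ := volume) J mJ'
    rw [← h, ENNReal.toReal_add (finOf (Set.inter_subset_left.trans hJsub))
      (finOf (Set.diff_subset.trans hJsub))]
  have hAsplit : (volume A).toReal ≤ (volume A').toReal + (volume (I \ I')).toReal := by
    have hsub : A ⊆ A' ∪ (I \ I') := by
      intro x hx
      by_cases h : x ∈ I'
      · exact Or.inl ⟨hx, h⟩
      · exact Or.inr ⟨hAI hx, h⟩
    have h1' : volume A ≤ volume A' + volume (I \ I') :=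
      (measure_mono hsub).trans (measure_union_le _ _)
    have h2' := ENNReal.toReal_mono (ENNReal.add_ne_top.mpr
      ⟨finOf (Set.inter_subset_left.trans hAsub), finOf (Set.diff_subset.trans hIsub)⟩) h1'
    rwa [ENNReal.toReal_add (finOf (Set.inter_subset_left.trans hAsub))
      (finOf (Set.diff_subset.trans hIsub))] at h2'
  have hBsplit : (volume B).toReal ≤ (volume B').toReal + (volume (J \ J')).toReal := by
    have hsub : B ⊆ B' ∪ (J \ J') := by
      intro x hx
      by_cases h : x ∈ J'
      · exact Or.inl ⟨hx, h⟩
      · exact Or.inr ⟨hBJ hx, h⟩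
    have h1' : volume B ≤ volume B' + volume (J \ J') :=
      (measure_mono hsub).trans (measure_union_le _ _)
    have h2' := ENNReal.toReal_mono (ENNReal.add_ne_top.mpr
      ⟨finOf (Set.inter_subset_left.trans hBsub), finOf (Set.diff_subset.trans hJsub)⟩) h1'
    rwa [ENNReal.toReal_add (finOf (Set.inter_subset_left.trans hBsub))
      (finOf (Set.diff_subset.trans hJsub))] at h2'
  -- quantitative consequences of h2, h3
  have h2' : ε' * (volume I').toReal < (volume I).toReal * ε - (volume (I \ I')).toReal :=
    (lt_div_iff₀ hI'pos).mp h2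
  have h3' : ε' * (volume J').toReal < (volume J).toReal * ε - (volume (J \ J')).toReal :=
    (lt_div_iff₀ hJ'pos).mp h3
  have hcommI : (volume I).toReal * ε = ε * (volume I).toReal := mul_comm _ _
  have hcommJ : (volume J).toReal * ε = ε * (volume J).toReal := mul_comm _ _
  have hA'ge : ε' * (volume I').toReal ≤ (volume A').toReal := by linarith
  have hB'ge : ε' * (volume J').toReal ≤ (volume B').toReal := by linarith
  have hεI : ε * (volume I).toReal ≤ (volume I).toReal := by nlinarith
  have hεJ : ε * (volume J).toReal ≤ (volume J).toReal := by nlinarith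
  have hK1ge : ε' * (volume I').toReal ≤ (volume K1).toReal := by linarith
  have hK2ge : ε' * (volume J').toReal ≤ (volume K2).toReal := by linarith
  have hA'pos : 0 < (volume A').toReal := lt_of_lt_of_le (mul_pos hε'0 hI'pos) hA'ge
  have hB'pos : 0 < (volume B').toReal := lt_of_lt_of_le (mul_pos hε'0 hJ'pos) hB'ge
  have hK1pos : 0 < (volume K1).toReal := lt_of_lt_of_le (mul_pos hε'0 hI'pos) hK1ge
  have hK2pos : 0 < (volume K2).toReal := lt_of_lt_of_le (mul_pos hε'0 hJ'pos) hK2ge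
  have hApos : 0 < (volume A).toReal := lt_of_lt_of_le (mul_pos hε0 hIpos) hAvol
  have hBpos : 0 < (volume B).toReal := lt_of_lt_of_le (mul_pos hε0 hJpos) hBvol
  -- the regularity hypothesis applied to (A', B')
  have hT2 : |dBox f A' B' - dBox f I' J'| ≤ ε' :=
    hreg A' B' Set.inter_subset_right Set.inter_subset_right
      (hA.inter hI') (hB.inter hJ') hA'ge hB'ge
  -- set identities for the three difference sets
  have hsd1 : (A ×ˢ B) \ (A' ×ˢ B') ⊆ symmDiff (I ×ˢ J) (I' ×ˢ J') := by
    rw [hA'def, hB'def, ← Set.prod_inter_prod, Set.diff_self_inter, Set.symmDiff_def]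
    exact (Set.diff_subset_diff_left (Set.prod_mono hAI hBJ)).trans Set.subset_union_left
  have hsd3 : (I' ×ˢ J') \ (K1 ×ˢ K2) ⊆ symmDiff (I ×ˢ J) (I' ×ˢ J') := by
    have hK : K1 ×ˢ K2 = (I' ×ˢ J') ∩ (I ×ˢ J) := by
      rw [Set.prod_inter_prod, hK1def, hK2def, Set.inter_comm I I', Set.inter_comm J J']
    rw [hK, Set.diff_self_inter, Set.symmDiff_def]
    exact Set.subset_union_right
  have hsd4 : (I ×ˢ J) \ (K1 ×ˢ K2) ⊆ symmDiff (I ×ˢ J) (I' ×ˢ J') := by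
    rw [hK1def, hK2def, ← Set.prod_inter_prod, Set.diff_self_inter, Set.symmDiff_def]
    exact Set.subset_union_left
  -- the three auxNested applications
  have key : ∀ (X Y X' Y' : Set ℝ), MeasurableSet X' → MeasurableSet Y' →
      X' ⊆ X → Y' ⊆ Y → X ⊆ Set.Icc 0 1 → Y ⊆ Set.Icc 0 1 →
      0 < (volume X').toReal → 0 < (volume Y').toReal →
      (X ×ˢ Y) \ (X' ×ˢ Y') ⊆ symmDiff (I ×ˢ J) (I' ×ˢ J') →
      |dBox f X Y - dBox f X' Y'| ≤ D / ((volume X).toReal * (volume Y).toReal) := by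
    intro X Y X' Y' mX' mY' hXX hYY hXs hYs hX'p hY'p hdiff
    have h := auxNested hmeas hf (S := X ×ˢ Y) (S' := X' ×ˢ Y') (mX'.prod mY')
      (Set.prod_mono hXX hYY) (finBox (Set.prod_mono hXs hYs))
      (by rw [vol_prod_toReal]; exact mul_pos hX'p hY'p)
    rw [← dBox_eq_set, ← dBox_eq_set, vol_prod_toReal] at h
    refine h.trans ?_
    have hXp : 0 < (volume X).toReal := lt_of_lt_of_le hX'p
      (ENNReal.toReal_mono (finOf hXs) (measure_mono hXX))
    have hYp : 0 < (volume Y).toReal := lt_of_lt_of_le hY'p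
      (ENNReal.toReal_mono (finOf hYs) (measure_mono hYY))
    exact (div_le_div_iff_of_pos_right (mul_pos hXp hYp)).mpr (hDle hdiff)
  have hT1 : |dBox f A B - dBox f A' B'| ≤
      D / ((volume A).toReal * (volume B).toReal) :=
    key A B A' B' (mA.inter mI') (mB.inter mJ') Set.inter_subset_left
      Set.inter_subset_left hAsub hBsub hA'pos hB'pos hsd1
  have hT3 : |dBox f I' J' - dBox f K1 K2| ≤
      D / ((volume I').toReal * (volume J').toReal) :=
    key I' J' K1 K2 (mI.inter mI') (mJ.inter mJ') Set.inter_subset_right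
      Set.inter_subset_right hI'sub hJ'sub hK1pos hK2pos hsd3
  have hT4 : |dBox f I J - dBox f K1 K2| ≤
      D / ((volume I).toReal * (volume J).toReal) :=
    key I J K1 K2 (mI.inter mI') (mJ.inter mJ') Set.inter_subset_left
      Set.inter_subset_left hIsub hJsub hK1pos hK2pos hsd4
  -- product measure bookkeeping for the final arithmetic
  have hprodsplit : (volume ((I ×ˢ J) \ (K1 ×ˢ K2))).toReal =
      (volume I).toReal * (volume J).toReal - (volume K1).toReal * (volume K2).toReal := by
    have h := split_toReal (S := I ×ˢ J) (S' := K1 ×ˢ K2)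
      ((mI.inter mI').prod (mJ.inter mJ'))
      (Set.prod_mono Set.inter_subset_left Set.inter_subset_left)
      (finBox (Set.prod_mono hIsub hJsub))
    rw [vol_prod_toReal, vol_prod_toReal] at h
    linarith
  have hkD : (volume I).toReal * (volume J).toReal -
      (volume K1).toReal * (volume K2).toReal ≤ D := by
    rw [← hprodsplit]; exact hDle hsd4
  have hki' : (volume K1).toReal * (volume K2).toReal ≤
      (volume I').toReal * (volume J').toReal := by
    have e1 : (volume K1).toReal ≤ (volume I').toReal :=
      ENNReal.toReal_mono finI' (measure_mono Set.inter_subset_right)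
    have e2 : (volume K2).toReal ≤ (volume J').toReal :=
      ENNReal.toReal_mono finJ' (measure_mono Set.inter_subset_right)
    exact mul_le_mul e1 e2 hK2pos.le (le_of_lt hI'pos)
  have habp : ε ^ 2 * ((volume I).toReal * (volume J).toReal) ≤
      (volume A).toReal * (volume B).toReal := by
    nlinarith [mul_le_mul hAvol hBvol (mul_nonneg hε0.le hJpos.le) hApos.le]
  -- assemble
  have tri : |dBox f A B - dBox f I J| ≤
      |dBox f A B - dBox f A' B'| + |dBox f A' B' - dBox f I' J'| +
      |dBox f I' J' - dBox f K1 K2| + |dBox f I J - dBox f K1 K2| := by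
    have t1 := abs_sub_le (dBox f A B) (dBox f A' B') (dBox f I' J')
    have t2 := abs_sub_le (dBox f A B) (dBox f I' J') (dBox f K1 K2)
    have t3 := abs_sub_le (dBox f A B) (dBox f K1 K2) (dBox f I J)
    have t4 := abs_sub_comm (dBox f K1 K2) (dBox f I J)
    linarith
  have hfinal := final_arith (ε := ε) (ε' := ε') (D := D)
    (i := (volume I).toReal) (j := (volume J).toReal)
    (i' := (volume I').toReal) (j' := (volume J').toReal)
    (k := (volume K1).toReal * (volume K2).toReal)
    (ab := (volume A).toReal * (volume B).toReal)
    hε0 hε1 hε'0 (mul_pos hIpos hJpos) (mul_pos hI'pos hJ'pos)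
    habp hD0 hkD hki' h1
  linarith
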